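/- Let z ∈ ℝ^k, V ∈ ℝ^{n×d}, and W, W₀ ∈ ℝ^{d×k}, and define S(W) = {ℓ ∈ {1,…,d} : 1{(Wz)_ℓ ≥ 0} ≠ 1{(W₀z)_ℓ ≥ 0}}. Then the Jacobian mapping satisfies the deterministic perturbation bound ‖J(W) − J(W₀)‖ ≤ ‖z‖·‖V_{S(W)}‖, where V_{S(W)} is the submatrix of V consisting of the columns with index in S(W). -/

import Mathlib

open MeasureTheory ProbabilityTheory Matrix

noncomputable section

/-- Euclidean norm of a vector. -/
def evnorm {ι : Type*} [Fintype ι] (x : ι → ℝ) : ℝ := Real.sqrt (∑ i, x i ^ 2)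

/-- Spectral (ℓ2 operator) norm of a matrix. -/
def specNorm {m n : Type*} [Fintype m] [Fintype n] (A : Matrix m n ℝ) : ℝ :=
  ⨆ x : {x : n → ℝ // evnorm x ≤ 1}, evnorm (A.mulVec x)

/-- Jacobian mapping of `W ↦ V · ReLU(W z)`:
`J(W)_{i,(ℓ,j)} = V_{iℓ}·1{(Wz)_ℓ ≥ 0}·z_j`. -/
def jacobian {n d k : ℕ} (V : Matrix (Fin n) (Fin d) ℝ) (z : Fin k → ℝ)
    (W : Matrix (Fin d) (Fin k) ℝ) : Matrix (Fin n) (Fin d × Fin k) ℝ :=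
  Matrix.of fun i p => V i p.1 * (if 0 ≤ W.mulVec z p.1 then 1 else 0) * z p.2

/-- The set `S(W)` of coordinates `ℓ` where the indicators `1{(Wz)_ℓ ≥ 0}` and
`1{(W₀z)_ℓ ≥ 0}` differ. -/
def indChanges {d k : ℕ} (z : Fin k → ℝ) (W₀ W : Matrix (Fin d) (Fin k) ℝ) :
    Finset (Fin d) :=
  Finset.univ.filter fun ℓ =>
    (if 0 ≤ W.mulVec z ℓ then (1 : ℝ) else 0) ≠ (if 0 ≤ W₀.mulVec z ℓ then (1 : ℝ) else 0)

lemma evnorm_nonneg {ι : Type*} [Fintype ι] (x : ι → ℝ) : 0 ≤ evnorm x := Real.sqrt_nonneg _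

lemma evnorm_sq {ι : Type*} [Fintype ι] (x : ι → ℝ) : evnorm x ^ 2 = ∑ i, x i ^ 2 :=
  Real.sq_sqrt (Finset.sum_nonneg fun _ _ => sq_nonneg _)

lemma evnorm_zero {ι : Type*} [Fintype ι] : evnorm (0 : ι → ℝ) = 0 := by
  simp [evnorm]

lemma evnorm_le {ι : Type*} [Fintype ι] {x : ι → ℝ} {a : ℝ} (ha : 0 ≤ a)
    (h : ∑ i, x i ^ 2 ≤ a ^ 2) : evnorm x ≤ a := by
  calc evnorm x ≤ Real.sqrt (a ^ 2) := Real.sqrt_le_sqrt h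
    _ = a := Real.sqrt_sq ha

lemma evnorm_smul {ι : Type*} [Fintype ι] (c : ℝ) (x : ι → ℝ) :
    evnorm (c • x) = |c| * evnorm x := by
  unfold evnorm
  rw [← Real.sqrt_sq_eq_abs, ← Real.sqrt_mul (sq_nonneg c), Finset.mul_sum]
  congr 1
  refine Finset.sum_congr rfl fun i _ => ?_
  simp [mul_pow]

lemma sum_sq_le_one {ι : Type*} [Fintype ι] {x : ι → ℝ} (h : evnorm x ≤ 1) :
    ∑ i, x i ^ 2 ≤ 1 := by
  have h2 := evnorm_sq x
  nlinarith [evnorm_nonneg x]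

lemma specNorm_bdd {m ι : Type*} [Fintype m] [Fintype ι] (A : Matrix m ι ℝ) :
    BddAbove (Set.range fun x : {x : ι → ℝ // evnorm x ≤ 1} => evnorm (A.mulVec x)) := by
  refine ⟨Real.sqrt (∑ i, ∑ j, A i j ^ 2), ?_⟩
  rintro _ ⟨x, rfl⟩
  refine evnorm_le (Real.sqrt_nonneg _) ?_
  rw [Real.sq_sqrt (Finset.sum_nonneg fun i _ => Finset.sum_nonneg fun j _ => sq_nonneg (A i j))]
  refine Finset.sum_le_sum fun i _ => ?_
  calc (A.mulVec x.1 i) ^ 2 = (∑ j, A i j * x.1 j) ^ 2 := by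
        simp [Matrix.mulVec, dotProduct]
    _ ≤ (∑ j, A i j ^ 2) * ∑ j, x.1 j ^ 2 := Finset.sum_mul_sq_le_sq_mul_sq _ _ _
    _ ≤ (∑ j, A i j ^ 2) * 1 := by
        refine mul_le_mul_of_nonneg_left (sum_sq_le_one x.2)
          (Finset.sum_nonneg fun _ _ => sq_nonneg _)
    _ = ∑ j, A i j ^ 2 := mul_one _

instance unitBall_nonempty {ι : Type*} [Fintype ι] :
    Nonempty {x : ι → ℝ // evnorm x ≤ 1} :=
  ⟨⟨0, by rw [evnorm_zero]; exact zero_le_one⟩⟩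

lemma specNorm_nonneg {m ι : Type*} [Fintype m] [Fintype ι] (A : Matrix m ι ℝ) :
    0 ≤ specNorm A := by
  have h := le_ciSup (specNorm_bdd A) (⟨0, by rw [evnorm_zero]; exact zero_le_one⟩ :
    {x : ι → ℝ // evnorm x ≤ 1})
  simp only [Matrix.mulVec_zero, evnorm_zero] at h; exact h

lemma evnorm_mulVec_le {m ι : Type*} [Fintype m] [Fintype ι] (A : Matrix m ι ℝ) (x : ι → ℝ) :
    evnorm (A.mulVec x) ≤ specNorm A * evnorm x := by
  rcases eq_or_lt_of_le (evnorm_nonneg x) with h | h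
  · have hs : ∑ i, x i ^ 2 = 0 := by
      have := evnorm_sq x; rw [← this, ← h]; ring
    have hx : x = 0 := by
      funext i
      have := (Finset.sum_eq_zero_iff_of_nonneg (fun i _ => sq_nonneg (x i))).1 hs i
        (Finset.mem_univ i)
      exact pow_eq_zero_iff two_ne_zero |>.mp this
    rw [hx, Matrix.mulVec_zero, evnorm_zero]
    exact mul_nonneg (specNorm_nonneg A) (evnorm_nonneg _) |>.trans_eq rfl
  · set c := evnorm x with hc
    have hc0 : c ≠ 0 := ne_of_gt h
    set u : ι → ℝ := c⁻¹ • x with hu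
    have hun : evnorm u = 1 := by
      rw [hu, evnorm_smul, abs_of_pos (inv_pos.2 h), ← hc, inv_mul_cancel₀ hc0]
    have hxu : x = c • u := by
      rw [hu, smul_smul, mul_inv_cancel₀ hc0, one_smul]
    have hle : evnorm (A.mulVec u) ≤ specNorm A :=
      le_ciSup (specNorm_bdd A) (⟨u, hun.le⟩ : {x : ι → ℝ // evnorm x ≤ 1})
    calc evnorm (A.mulVec x) = evnorm (c • A.mulVec u) := by rw [hxu, Matrix.mulVec_smul]
      _ = c * evnorm (A.mulVec u) := by rw [evnorm_smul, abs_of_pos h]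
      _ ≤ c * specNorm A := mul_le_mul_of_nonneg_left hle h.le
      _ = specNorm A * c := mul_comm _ _

/-- deterministic perturbation bound
`‖J(W) − J(W₀)‖ ≤ ‖z‖ · ‖V_{S(W)}‖`. -/
theorem jacobian_perturbation_deterministic {n d k : ℕ} (z : Fin k → ℝ)
    (V : Matrix (Fin n) (Fin d) ℝ) (W W₀ : Matrix (Fin d) (Fin k) ℝ) :
    specNorm (jacobian V z W - jacobian V z W₀) ≤
      evnorm z * specNorm (V.submatrix id (fun ℓ : indChanges z W₀ W => (ℓ : Fin d))) := by
  set S := indChanges z W₀ W with hS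
  set δ : Fin d → ℝ := fun ℓ =>
    (if 0 ≤ W.mulVec z ℓ then (1 : ℝ) else 0) - (if 0 ≤ W₀.mulVec z ℓ then (1 : ℝ) else 0)
    with hδ
  have hδ_zero : ∀ ℓ, ℓ ∉ S → δ ℓ = 0 := by
    intro ℓ hℓ
    simp only [hS, indChanges, Finset.mem_filter, Finset.mem_univ, true_and, not_not] at hℓ
    simp [hδ, hℓ]
  have hδ_sq : ∀ ℓ, δ ℓ ^ 2 ≤ 1 := by
    intro ℓ
    simp only [hδ]
    split_ifs <;> norm_num
  set M := V.submatrix id (fun ℓ : S => (ℓ : Fin d)) with hM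
  refine ciSup_le fun x => ?_
  set y : S → ℝ := fun ℓ => δ ℓ.1 * ∑ j, z j * x.1 (ℓ.1, j) with hy
  have entry : ∀ (i : Fin n) (p : Fin d × Fin k),
      (jacobian V z W - jacobian V z W₀) i p = V i p.1 * δ p.1 * z p.2 := by
    intro i p
    simp only [Matrix.sub_apply, jacobian, Matrix.of_apply, hδ]
    ring
  have key : (jacobian V z W - jacobian V z W₀).mulVec x.1 = M.mulVec y := by
    funext i
    have lhs_eq : (jacobian V z W - jacobian V z W₀).mulVec x.1 i
        = ∑ ℓ, V i ℓ * δ ℓ * ∑ j, z j * x.1 (ℓ, j) := by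
      simp only [Matrix.mulVec, dotProduct, entry]
      rw [Fintype.sum_prod_type]
      refine Finset.sum_congr rfl fun ℓ _ => ?_
      rw [Finset.mul_sum]
      exact Finset.sum_congr rfl fun j _ => by ring
    rw [lhs_eq]
    have rhs_eq : M.mulVec y i = ∑ ℓ : S, V i ℓ.1 * δ ℓ.1 * ∑ j, z j * x.1 (ℓ.1, j) := by
      simp only [Matrix.mulVec, dotProduct, hM, Matrix.submatrix_apply, id, hy]
      refine Finset.sum_congr rfl fun ℓ _ => ?_
      ring
    rw [rhs_eq, Finset.sum_coe_sort S (fun ℓ => V i ℓ * δ ℓ * ∑ j, z j * x.1 (ℓ, j))]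
    symm
    refine Finset.sum_subset (Finset.subset_univ S) fun ℓ _ hℓ => ?_
    rw [hδ_zero ℓ hℓ]; ring
  rw [key]
  have hy_le : evnorm y ≤ evnorm z := by
    refine evnorm_le (evnorm_nonneg z) ?_
    have step1 : ∀ ℓ : S, y ℓ ^ 2 ≤ (∑ j, z j ^ 2) * ∑ j, x.1 (ℓ.1, j) ^ 2 := by
      intro ℓ
      have hcs : (∑ j, z j * x.1 (ℓ.1, j)) ^ 2 ≤ (∑ j, z j ^ 2) * ∑ j, x.1 (ℓ.1, j) ^ 2 :=
        Finset.sum_mul_sq_le_sq_mul_sq _ _ _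
      have : y ℓ ^ 2 = δ ℓ.1 ^ 2 * (∑ j, z j * x.1 (ℓ.1, j)) ^ 2 := by rw [hy]; ring
      rw [this]
      calc δ ℓ.1 ^ 2 * (∑ j, z j * x.1 (ℓ.1, j)) ^ 2
          ≤ 1 * (∑ j, z j * x.1 (ℓ.1, j)) ^ 2 :=
            mul_le_mul_of_nonneg_right (hδ_sq ℓ.1) (sq_nonneg _)
        _ = (∑ j, z j * x.1 (ℓ.1, j)) ^ 2 := one_mul _
        _ ≤ _ := hcs
    calc ∑ ℓ : S, y ℓ ^ 2 ≤ ∑ ℓ : S, (∑ j, z j ^ 2) * ∑ j, x.1 (ℓ.1, j) ^ 2 :=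
          Finset.sum_le_sum fun ℓ _ => step1 ℓ
      _ = (∑ j, z j ^ 2) * ∑ ℓ : S, ∑ j, x.1 (ℓ.1, j) ^ 2 := by rw [← Finset.mul_sum]
      _ ≤ (∑ j, z j ^ 2) * 1 := by
          refine mul_le_mul_of_nonneg_left ?_ (Finset.sum_nonneg fun _ _ => sq_nonneg _)
          calc ∑ ℓ : S, ∑ j, x.1 (ℓ.1, j) ^ 2
              = ∑ ℓ ∈ S, ∑ j, x.1 (ℓ, j) ^ 2 :=
                Finset.sum_coe_sort S (fun ℓ => ∑ j, x.1 (ℓ, j) ^ 2)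
            _ ≤ ∑ ℓ, ∑ j, x.1 (ℓ, j) ^ 2 :=
                Finset.sum_le_sum_of_subset_of_nonneg (Finset.subset_univ S)
                  (fun _ _ _ => Finset.sum_nonneg fun _ _ => sq_nonneg _)
            _ = ∑ p : Fin d × Fin k, x.1 p ^ 2 := (Fintype.sum_prod_type (f := fun p => x.1 p ^ 2)).symm
            _ ≤ 1 := sum_sq_le_one x.2
      _ = evnorm z ^ 2 := by rw [evnorm_sq, mul_one]
  calc evnorm (M.mulVec y) ≤ specNorm M * evnorm y := evnorm_mulVec_le M y
    _ ≤ specNorm M * evnorm z := mul_le_mul_of_nonneg_left hy_le (specNorm_nonneg M)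
    _ = evnorm z * specNorm M := mul_comm _ _
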